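/- (Exponential decay of the iterated contraction.) Let n ≥ 1, let G be a real n×n matrix, F ∈ ℝⁿ, v > 0, W a symmetric positive definite n×n real matrix, and let R be a symmetric positive semidefinite n×n matrix satisfying the Riccati fixed-point equation R = G(R − (R F)(R F)ᵀ/(⟨F, R F⟩ + v))Gᵀ + W. Set A := R F/(⟨F, R F⟩ + v) and let P := (I − F Aᵀ)Gᵀ be the matrix of the map x ↦ Gᵀx − ⟨A, Gᵀx⟩F. Then there exists γ with 0 ≤ γ < 1 such that for every integer s ≥ 0 and every x ∈ ℝⁿ: ⟨R Pˢx, Pˢx⟩ ≤ γˢ·⟨R x, x⟩. In particular, ⟨R PˢF, PˢF⟩ ≤ γˢ·⟨R F, F⟩ and ‖PˢF‖ → 0 exponentially fast in s. -/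

import Mathlib

open Matrix

lemma vecMulVec_mulVec' {n : ℕ} (w v x : Fin n → ℝ) :
    Matrix.vecMulVec w v *ᵥ x = (v ⬝ᵥ x) • w := by
  ext i
  simp [Matrix.vecMulVec, Matrix.mulVec, dotProduct, Finset.mul_sum, Finset.sum_mul,
    mul_comm, mul_assoc, mul_left_comm]

lemma scal_ineq (c v d a w : ℝ) (hc : 0 < c) (hv : 0 < v) :
    a - 2 * (c⁻¹ * d) * d + (c⁻¹ * d) ^ 2 * (c - v) + w ≤ a - c⁻¹ * (d * d) + w := by
  have h1 : (c⁻¹ * d) ^ 2 * c = c⁻¹ * (d * d) := by field_simp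
  nlinarith [sq_nonneg (c⁻¹ * d), hv.le]

lemma scale_le' {t a b γ : ℝ} (ht : 0 < t)
    (h : t⁻¹ * t⁻¹ * a - t⁻¹ * t⁻¹ * b ≤ γ * (t⁻¹ * t⁻¹ * a)) :
    a - b ≤ γ * a := by
  have ha' : 0 < t⁻¹ * t⁻¹ := by positivity
  have h' : t⁻¹ * t⁻¹ * (a - b) ≤ t⁻¹ * t⁻¹ * (γ * a) := by ring_nf; ring_nf at h; linarith
  exact (mul_le_mul_iff_right₀ ha').mp h'

lemma scale_min' {t m a : ℝ} (ht : 0 < t) (h : m ≤ t⁻¹ * t⁻¹ * a) : m * (t * t) ≤ a := by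
  have h4 := mul_le_mul_of_nonneg_left h (mul_pos ht ht).le
  have e : t * t * (t⁻¹ * t⁻¹ * a) = a := by field_simp
  rw [e] at h4
  linarith

/-- Exponential decay of the iterated contraction: With `R` a symmetric
positive semidefinite solution of the Riccati fixed-point equation, `W` symmetric
positive definite, `A := R F/(⟨F, R F⟩ + v)` and `P := (I − F Aᵀ)Gᵀ`, there is
`γ ∈ [0,1)` with `⟨R Pˢx, Pˢx⟩ ≤ γˢ·⟨R x, x⟩` for all `s` and `x`; in particular
`⟨R PˢF, PˢF⟩ ≤ γˢ·⟨R F, F⟩`, and the Euclidean norm `‖PˢF‖` decays exponentially. -/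
theorem stmt_6 {n : ℕ} (hn : 1 ≤ n) (R G W : Matrix (Fin n) (Fin n) ℝ)
    (F : Fin n → ℝ) (v : ℝ) (hv : 0 < v) (hR : R.PosSemidef) (hW : W.PosDef)
    (hRic : R = G * (R - (F ⬝ᵥ (R *ᵥ F) + v)⁻¹ • vecMulVec (R *ᵥ F) (R *ᵥ F)) * Gᵀ + W)
    (A : Fin n → ℝ) (hA : A = (F ⬝ᵥ (R *ᵥ F) + v)⁻¹ • (R *ᵥ F))
    (P : Matrix (Fin n) (Fin n) ℝ) (hP : P = (1 - vecMulVec F A) * Gᵀ) :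
    ∃ γ : ℝ, 0 ≤ γ ∧ γ < 1 ∧
      (∀ (s : ℕ) (x : Fin n → ℝ),
        (R *ᵥ (P ^ s *ᵥ x)) ⬝ᵥ (P ^ s *ᵥ x) ≤ γ ^ s * ((R *ᵥ x) ⬝ᵥ x)) ∧
      (∀ s : ℕ, (R *ᵥ (P ^ s *ᵥ F)) ⬝ᵥ (P ^ s *ᵥ F) ≤ γ ^ s * ((R *ᵥ F) ⬝ᵥ F)) ∧
      ∃ c ρ : ℝ, 0 ≤ c ∧ 0 ≤ ρ ∧ ρ < 1 ∧
        ∀ s : ℕ, Real.sqrt ((P ^ s *ᵥ F) ⬝ᵥ (P ^ s *ᵥ F)) ≤ c * ρ ^ s := by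
  classical
  have hq : ∀ x, 0 ≤ (R *ᵥ x) ⬝ᵥ x := fun x => by
    simpa [dotProduct_comm] using hR.dotProduct_mulVec_nonneg x
  set c : ℝ := F ⬝ᵥ (R *ᵥ F) + v with hc
  have hcpos : 0 < c := by
    simp only [hc]
    nlinarith [hq F, dotProduct_comm F (R *ᵥ F)]
  have hRsymm : Rᵀ = R := hR.1
  have hsym : ∀ y z : Fin n → ℝ, (R *ᵥ y) ⬝ᵥ z = (R *ᵥ z) ⬝ᵥ y := by
    intro y z
    rw [dotProduct_comm, dotProduct_mulVec, ← mulVec_transpose, hRsymm]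
  -- one-step energy decrease
  have step : ∀ x : Fin n → ℝ,
      (R *ᵥ (P *ᵥ x)) ⬝ᵥ (P *ᵥ x) + (W *ᵥ x) ⬝ᵥ x ≤ (R *ᵥ x) ⬝ᵥ x := by
    intro x
    set y := Gᵀ *ᵥ x with hy
    set d := (R *ᵥ F) ⬝ᵥ y with hd
    have hPx : P *ᵥ x = y - (c⁻¹ * d) • F := by
      rw [hP, ← mulVec_mulVec, sub_mulVec, one_mulVec, hA, vecMulVec_mulVec']
      congr 1
      rw [smul_dotProduct, smul_eq_mul]
    have h1 : (R *ᵥ y) ⬝ᵥ F = d := hsym y F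
    have hL : (R *ᵥ (P *ᵥ x)) ⬝ᵥ (P *ᵥ x)
        = (R *ᵥ y) ⬝ᵥ y - 2 * (c⁻¹ * d) * d + (c⁻¹ * d) ^ 2 * ((R *ᵥ F) ⬝ᵥ F) := by
      simp only [hPx, mulVec_sub, mulVec_smul, sub_dotProduct, dotProduct_sub,
        smul_dotProduct, dotProduct_smul, smul_eq_mul, h1, ← hd]
      ring
    have hRq : (R *ᵥ x) ⬝ᵥ x = (R *ᵥ y) ⬝ᵥ y - c⁻¹ * (d * d) + (W *ᵥ x) ⬝ᵥ x := by
      conv_lhs => rw [hRic]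
      rw [add_mulVec, add_dotProduct, ← mulVec_mulVec, ← mulVec_mulVec]
      congr 1
      rw [dotProduct_comm, dotProduct_mulVec, ← mulVec_transpose, ← hy,
        sub_mulVec, smul_mulVec, vecMulVec_mulVec', dotProduct_sub,
        dotProduct_smul, dotProduct_smul, smul_eq_mul, smul_eq_mul,
        dotProduct_comm y (R *ᵥ y), dotProduct_comm y (R *ᵥ F), ← hd]
    have hFRF : (R *ᵥ F) ⬝ᵥ F = c - v := by
      rw [dotProduct_comm, hc]; ring
    rw [hL, hRq, hFRF]
    exact scal_ineq c v d _ _ hcpos hv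
  -- positivity facts
  have hwpos : ∀ x : Fin n → ℝ, x ≠ 0 → 0 < (W *ᵥ x) ⬝ᵥ x := fun x hx => by
    simpa [dotProduct_comm] using hW.dotProduct_mulVec_pos hx
  have hrw : ∀ x, (W *ᵥ x) ⬝ᵥ x ≤ (R *ᵥ x) ⬝ᵥ x := fun x => by
    have h1 := step x; have h2 := hq (P *ᵥ x); linarith
  have hrpos : ∀ x : Fin n → ℝ, x ≠ 0 → 0 < (R *ᵥ x) ⬝ᵥ x := fun x hx =>
    lt_of_lt_of_le (hwpos x hx) (hrw x)
  have hself : ∀ x : Fin n → ℝ, 0 ≤ x ⬝ᵥ x := fun x => by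
    simp only [dotProduct]
    exact Finset.sum_nonneg fun i _ => mul_self_nonneg _
  -- the unit sphere for the dot product
  set S : Set (Fin n → ℝ) := {x | x ⬝ᵥ x = 1} with hS
  have hcont_dot : Continuous fun x : Fin n → ℝ => x ⬝ᵥ x :=
    continuous_id.dotProduct continuous_id
  have hcont_r : Continuous fun x : Fin n → ℝ => (R *ᵥ x) ⬝ᵥ x :=
    (continuous_const.matrix_mulVec continuous_id).dotProduct continuous_id
  have hcont_w : Continuous fun x : Fin n → ℝ => (W *ᵥ x) ⬝ᵥ x :=
    (continuous_const.matrix_mulVec continuous_id).dotProduct continuous_id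
  have hSclosed : IsClosed S := isClosed_eq hcont_dot continuous_const
  have hSbdd : Bornology.IsBounded S := by
    refine (Metric.isBounded_closedBall (x := (0 : Fin n → ℝ)) (r := 1)).subset ?_
    intro x hx
    rw [Metric.mem_closedBall, dist_zero_right]
    rw [pi_norm_le_iff_of_nonneg zero_le_one]
    intro i
    have hx' : x ⬝ᵥ x = 1 := hx
    have h1 : x i * x i ≤ 1 := by
      rw [← hx']
      simp only [dotProduct]
      exact Finset.single_le_sum (fun j _ => mul_self_nonneg (x j)) (Finset.mem_univ i)
    rw [Real.norm_eq_abs]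
    nlinarith [abs_nonneg (x i), abs_mul_abs_self (x i)]
  have hScompact : IsCompact S := Metric.isCompact_of_isClosed_isBounded hSclosed hSbdd
  have hSne : S.Nonempty := by
    refine ⟨Pi.single ⟨0, hn⟩ 1, ?_⟩
    show (Pi.single (⟨0, hn⟩ : Fin n) (1:ℝ)) ⬝ᵥ (Pi.single ⟨0, hn⟩ 1) = 1
    rw [dotProduct_single]
    simp
  have hx_ne : ∀ x ∈ S, x ≠ (0 : Fin n → ℝ) := by
    intro x hx h0
    have hx' : x ⬝ᵥ x = 1 := hx
    rw [h0] at hx'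
    simp at hx'
  -- the contraction factor
  set φ : (Fin n → ℝ) → ℝ :=
    fun x => ((R *ᵥ x) ⬝ᵥ x - (W *ᵥ x) ⬝ᵥ x) / ((R *ᵥ x) ⬝ᵥ x) with hφ
  have hφcont : ContinuousOn φ S :=
    ContinuousOn.div (hcont_r.sub hcont_w).continuousOn hcont_r.continuousOn
      (fun x hx => (hrpos x (hx_ne x hx)).ne')
  obtain ⟨x₀, hx₀S, hmax⟩ := hScompact.exists_isMaxOn hSne hφcont
  set γ : ℝ := max (φ x₀) 0 with hγ
  have hγ0 : 0 ≤ γ := le_max_right _ _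
  have hγ1 : γ < 1 := by
    apply max_lt _ one_pos
    have h1 := hrpos x₀ (hx_ne _ hx₀S)
    have h2 := hwpos x₀ (hx_ne _ hx₀S)
    rw [hφ]
    simp only
    rw [div_lt_one h1]
    linarith
  -- one-step contraction with factor γ
  have hcmain : ∀ x : Fin n → ℝ,
      (R *ᵥ (P *ᵥ x)) ⬝ᵥ (P *ᵥ x) ≤ γ * ((R *ᵥ x) ⬝ᵥ x) := by
    intro x
    by_cases hx : x = 0
    · simp [hx]
    · have hxx : 0 < x ⬝ᵥ x := by
        refine lt_of_le_of_ne (hself x) (Ne.symm ?_)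
        exact fun h => hx (dotProduct_self_eq_zero.mp h)
      set t := Real.sqrt (x ⬝ᵥ x) with htdef
      have ht : 0 < t := Real.sqrt_pos.mpr hxx
      have htt : t * t = x ⬝ᵥ x := Real.mul_self_sqrt hxx.le
      have huS : (t⁻¹ • x) ∈ S := by
        show (t⁻¹ • x) ⬝ᵥ (t⁻¹ • x) = 1
        rw [smul_dotProduct, dotProduct_smul, smul_eq_mul, smul_eq_mul, ← htt]
        field_simp
      have hru : (R *ᵥ (t⁻¹ • x)) ⬝ᵥ (t⁻¹ • x) = t⁻¹ * t⁻¹ * ((R *ᵥ x) ⬝ᵥ x) := by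
        rw [mulVec_smul, smul_dotProduct, dotProduct_smul, smul_eq_mul, smul_eq_mul]; ring
      have hwu : (W *ᵥ (t⁻¹ • x)) ⬝ᵥ (t⁻¹ • x) = t⁻¹ * t⁻¹ * ((W *ᵥ x) ⬝ᵥ x) := by
        rw [mulVec_smul, smul_dotProduct, dotProduct_smul, smul_eq_mul, smul_eq_mul]; ring
      have hrupos : 0 < (R *ᵥ (t⁻¹ • x)) ⬝ᵥ (t⁻¹ • x) := hrpos _ (hx_ne _ huS)
      have hφu : φ (t⁻¹ • x) ≤ γ := le_trans (hmax huS) (le_max_left _ _)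
      rw [hφ] at hφu
      simp only at hφu
      rw [div_le_iff₀ hrupos] at hφu
      rw [hru, hwu] at hφu
      rw [hru] at hrupos
      have h3 : (R *ᵥ x) ⬝ᵥ x - (W *ᵥ x) ⬝ᵥ x ≤ γ * ((R *ᵥ x) ⬝ᵥ x) :=
        scale_le' ht hφu
      have h4 := step x
      linarith
  -- iterated contraction
  have hiter : ∀ (s : ℕ) (x : Fin n → ℝ),
      (R *ᵥ (P ^ s *ᵥ x)) ⬝ᵥ (P ^ s *ᵥ x) ≤ γ ^ s * ((R *ᵥ x) ⬝ᵥ x) := by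
    intro s
    induction s with
    | zero => intro x; simp [one_mulVec]
    | succ s ih =>
      intro x
      have h1 : P ^ (s + 1) *ᵥ x = P ^ s *ᵥ (P *ᵥ x) := by
        rw [mulVec_mulVec, ← pow_succ]
      rw [h1]
      calc (R *ᵥ (P ^ s *ᵥ (P *ᵥ x))) ⬝ᵥ (P ^ s *ᵥ (P *ᵥ x))
          ≤ γ ^ s * ((R *ᵥ (P *ᵥ x)) ⬝ᵥ (P *ᵥ x)) := ih (P *ᵥ x)
        _ ≤ γ ^ s * (γ * ((R *ᵥ x) ⬝ᵥ x)) :=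
            mul_le_mul_of_nonneg_left (hcmain x) (pow_nonneg hγ0 s)
        _ = γ ^ (s + 1) * ((R *ᵥ x) ⬝ᵥ x) := by ring
  refine ⟨γ, hγ0, hγ1, hiter, fun s => hiter s F, ?_⟩
  -- lower bound for the R-quadratic form
  obtain ⟨x₁, hx₁S, hmin⟩ := hScompact.exists_isMinOn hSne hcont_r.continuousOn
  set m : ℝ := (R *ᵥ x₁) ⬝ᵥ x₁ with hm
  have hmpos : 0 < m := hrpos _ (hx_ne _ hx₁S)
  have hlow : ∀ y : Fin n → ℝ, m * (y ⬝ᵥ y) ≤ (R *ᵥ y) ⬝ᵥ y := by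
    intro y
    by_cases hy : y = 0
    · simp [hy]
    · have hyy : 0 < y ⬝ᵥ y := by
        refine lt_of_le_of_ne (hself y) (Ne.symm ?_)
        exact fun h => hy (dotProduct_self_eq_zero.mp h)
      set t := Real.sqrt (y ⬝ᵥ y) with htdef
      have ht : 0 < t := Real.sqrt_pos.mpr hyy
      have htt : t * t = y ⬝ᵥ y := Real.mul_self_sqrt hyy.le
      have huS : (t⁻¹ • y) ∈ S := by
        show (t⁻¹ • y) ⬝ᵥ (t⁻¹ • y) = 1
        rw [smul_dotProduct, dotProduct_smul, smul_eq_mul, smul_eq_mul, ← htt]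
        field_simp
      have hru : (R *ᵥ (t⁻¹ • y)) ⬝ᵥ (t⁻¹ • y) = t⁻¹ * t⁻¹ * ((R *ᵥ y) ⬝ᵥ y) := by
        rw [mulVec_smul, smul_dotProduct, dotProduct_smul, smul_eq_mul, smul_eq_mul]; ring
      have h1 : m ≤ t⁻¹ * t⁻¹ * ((R *ᵥ y) ⬝ᵥ y) := by
        have h2 : m ≤ (R *ᵥ (t⁻¹ • y)) ⬝ᵥ (t⁻¹ • y) := hmin huS
        rwa [hru] at h2
      rw [← htt]
      exact scale_min' ht h1
  refine ⟨Real.sqrt (m⁻¹ * ((R *ᵥ F) ⬝ᵥ F)), Real.sqrt γ,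
    Real.sqrt_nonneg _, Real.sqrt_nonneg _, ?_, ?_⟩
  · nlinarith [Real.sq_sqrt hγ0, Real.sqrt_nonneg γ, hγ1]
  · intro s
    have hc2 : 0 ≤ m⁻¹ * ((R *ᵥ F) ⬝ᵥ F) := mul_nonneg (inv_nonneg.mpr hmpos.le) (hq F)
    have h1 : (P ^ s *ᵥ F) ⬝ᵥ (P ^ s *ᵥ F) ≤ m⁻¹ * (γ ^ s * ((R *ᵥ F) ⬝ᵥ F)) := by
      have h2 : m * ((P ^ s *ᵥ F) ⬝ᵥ (P ^ s *ᵥ F)) ≤ γ ^ s * ((R *ᵥ F) ⬝ᵥ F) :=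
        le_trans (hlow _) (hiter s F)
      calc (P ^ s *ᵥ F) ⬝ᵥ (P ^ s *ᵥ F)
          = m⁻¹ * (m * ((P ^ s *ᵥ F) ⬝ᵥ (P ^ s *ᵥ F))) := by
            field_simp
        _ ≤ m⁻¹ * (γ ^ s * ((R *ᵥ F) ⬝ᵥ F)) :=
            mul_le_mul_of_nonneg_left h2 (inv_nonneg.mpr hmpos.le)
    have e : m⁻¹ * (γ ^ s * ((R *ᵥ F) ⬝ᵥ F))
        = (Real.sqrt (m⁻¹ * ((R *ᵥ F) ⬝ᵥ F)) * (Real.sqrt γ) ^ s) ^ 2 := by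
      rw [mul_pow, ← pow_mul, mul_comm s 2, pow_mul, Real.sq_sqrt hc2, Real.sq_sqrt hγ0]
      ring
    calc Real.sqrt ((P ^ s *ᵥ F) ⬝ᵥ (P ^ s *ᵥ F))
        ≤ Real.sqrt (m⁻¹ * (γ ^ s * ((R *ᵥ F) ⬝ᵥ F))) := Real.sqrt_le_sqrt h1
      _ = Real.sqrt (m⁻¹ * ((R *ᵥ F) ⬝ᵥ F)) * (Real.sqrt γ) ^ s := by
          rw [e, Real.sqrt_sq (by positivity)]
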